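/- arXiv:1810.05542 — 5 statements merged into one kernel-verified Lean document; each statement's English description precedes it below -/
import Mathlib

section
/- Simulation is transitive: let Σ₁, Σ₂, Σ₃ be systems in driving variable form with the same external space W, and let S₁₂ be a full simulation relation of Σ₁ by Σ₂ and S₂₃ a full simulation relation of Σ₂ by Σ₃. Then S₁₃ = {(x₁, x₃) : ∃ x₂ ∈ X₂ such that (x₁, x₂) ∈ S₁₂ and (x₂, x₃) ∈ S₂₃} is a full simulation relation of Σ₁ by Σ₃; in particular Σ₁ ≼ Σ₂ and Σ₂ ≼ Σ₃ imply Σ₁ ≼ Σ₃. -/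
/-- A linear system in driving variable form `ẋ = A x + G d`, `w = C x`, `0 = H x`. -/
structure DVSystem (X W D Y : Type)
    [AddCommGroup X] [Module ℝ X] [AddCommGroup W] [Module ℝ W]
    [AddCommGroup D] [Module ℝ D] [AddCommGroup Y] [Module ℝ Y] where
  A : X →ₗ[ℝ] X
  G : D →ₗ[ℝ] X
  C : X →ₗ[ℝ] W
  H : X →ₗ[ℝ] Y

namespace DVSystem

section basic

variable {X W D Y : Type}
  [AddCommGroup X] [Module ℝ X] [AddCommGroup W] [Module ℝ W]
  [AddCommGroup D] [Module ℝ D] [AddCommGroup Y] [Module ℝ Y]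

/-- A subspace `U` is consistent-admissible if `A U ⊆ U + im G` and `U ⊆ ker H`. -/
def Admissible (P : DVSystem X W D Y) (U : Submodule ℝ X) : Prop :=
  U.map P.A ≤ U ⊔ LinearMap.range P.G ∧ U ≤ LinearMap.ker P.H

/-- The consistent subspace `V*`: the largest consistent-admissible subspace. -/
def V (P : DVSystem X W D Y) : Submodule ℝ X :=
  sSup {U | P.Admissible U}

end basic

section sim

variable {W : Type} [AddCommGroup W] [Module ℝ W]
variable {X₁ D₁ Y₁ : Type} [AddCommGroup X₁] [Module ℝ X₁]
  [AddCommGroup D₁] [Module ℝ D₁] [AddCommGroup Y₁] [Module ℝ Y₁]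
variable {X₂ D₂ Y₂ : Type} [AddCommGroup X₂] [Module ℝ X₂]
  [AddCommGroup D₂] [Module ℝ D₂] [AddCommGroup Y₂] [Module ℝ Y₂]

/-- Items (i)-(ii) of the (algebraic) definition of a simulation relation. -/
def SimConds (P₁ : DVSystem X₁ W D₁ Y₁) (P₂ : DVSystem X₂ W D₂ Y₂)
    (S : Submodule ℝ (X₁ × X₂)) : Prop :=
  ∀ x₁ x₂, (x₁, x₂) ∈ S →
    (∀ d₁ : D₁, P₁.A x₁ + P₁.G d₁ ∈ P₁.V →
      ∃ d₂ : D₂, P₂.A x₂ + P₂.G d₂ ∈ P₂.V ∧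
        (P₁.A x₁ + P₁.G d₁, P₂.A x₂ + P₂.G d₂) ∈ S) ∧
    P₁.C x₁ = P₂.C x₂

/-- `S` is a simulation relation of `P₁` by `P₂`. -/
def IsSimRel (P₁ : DVSystem X₁ W D₁ Y₁) (P₂ : DVSystem X₂ W D₂ Y₂)
    (S : Submodule ℝ (X₁ × X₂)) : Prop :=
  S.map (LinearMap.fst ℝ X₁ X₂) ≤ P₁.V ∧ S.map (LinearMap.snd ℝ X₁ X₂) ≤ P₂.V ∧
    SimConds P₁ P₂ S

/-- `S` is a full simulation relation of `P₁` by `P₂`: in addition `π₁(S) = V₁*`. -/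
def IsFullSimRel (P₁ : DVSystem X₁ W D₁ Y₁) (P₂ : DVSystem X₂ W D₂ Y₂)
    (S : Submodule ℝ (X₁ × X₂)) : Prop :=
  IsSimRel P₁ P₂ S ∧ S.map (LinearMap.fst ℝ X₁ X₂) = P₁.V

/-- `P₁ ≼ P₂`: `P₁` is simulated by `P₂`. -/
def Simulates (P₁ : DVSystem X₁ W D₁ Y₁) (P₂ : DVSystem X₂ W D₂ Y₂) : Prop :=
  ∃ S : Submodule ℝ (X₁ × X₂), IsFullSimRel P₁ P₂ S

/-- The composition `P₁ ∘ P₂` obtained by sharing the external variable `w₁ = w₂`. -/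
noncomputable def comp (P₁ : DVSystem X₁ W D₁ Y₁) (P₂ : DVSystem X₂ W D₂ Y₂) :
    DVSystem (X₁ × X₂) W (D₁ × D₂) (Y₁ × Y₂ × W) where
  A := P₁.A.prodMap P₂.A
  G := P₁.G.prodMap P₂.G
  C := (1/2 : ℝ) • (P₁.C ∘ₗ LinearMap.fst ℝ X₁ X₂ + P₂.C ∘ₗ LinearMap.snd ℝ X₁ X₂)
  H := (P₁.H ∘ₗ LinearMap.fst ℝ X₁ X₂).prod
    ((P₂.H ∘ₗ LinearMap.snd ℝ X₁ X₂).prod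
      (P₁.C ∘ₗ LinearMap.fst ℝ X₁ X₂ - P₂.C ∘ₗ LinearMap.snd ℝ X₁ X₂))

end sim

section relcomp

variable {X₁ X₂ X₃ : Type} [AddCommGroup X₁] [Module ℝ X₁]
  [AddCommGroup X₂] [Module ℝ X₂] [AddCommGroup X₃] [Module ℝ X₃]

/-- Composition of linear relations:
`{(x₁, x₃) | ∃ x₂, (x₁, x₂) ∈ S₁₂ ∧ (x₂, x₃) ∈ S₂₃}`. -/
def relComp (S₁₂ : Submodule ℝ (X₁ × X₂)) (S₂₃ : Submodule ℝ (X₂ × X₃)) :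
    Submodule ℝ (X₁ × X₃) where
  carrier := {p | ∃ x₂, (p.1, x₂) ∈ S₁₂ ∧ (x₂, p.2) ∈ S₂₃}
  zero_mem' := ⟨0, by exact S₁₂.zero_mem, by exact S₂₃.zero_mem⟩
  add_mem' := by
    rintro a b ⟨y, hy1, hy2⟩ ⟨z, hz1, hz2⟩
    exact ⟨y + z, S₁₂.add_mem hy1 hz1, S₂₃.add_mem hy2 hz2⟩
  smul_mem' := by
    rintro c a ⟨y, h1, h2⟩
    exact ⟨c • y, S₁₂.smul_mem c h1, S₂₃.smul_mem c h2⟩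

/-- The pairing `{(x, (x₁, x₂)) | (x, x₁) ∈ S₁ ∧ (x, x₂) ∈ S₂}` of two relations. -/
def pairRel (S₁ : Submodule ℝ (X₁ × X₂)) (S₂ : Submodule ℝ (X₁ × X₃)) :
    Submodule ℝ (X₁ × X₂ × X₃) where
  carrier := {p | (p.1, p.2.1) ∈ S₁ ∧ (p.1, p.2.2) ∈ S₂}
  zero_mem' := ⟨by exact S₁.zero_mem, by exact S₂.zero_mem⟩
  add_mem' := by
    rintro a b ⟨ha1, ha2⟩ ⟨hb1, hb2⟩
    exact ⟨S₁.add_mem ha1 hb1, S₂.add_mem ha2 hb2⟩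
  smul_mem' := by
    rintro c a ⟨h1, h2⟩
    exact ⟨S₁.smul_mem c h1, S₂.smul_mem c h2⟩

end relcomp

section contract

variable {W : Type} [AddCommGroup W] [Module ℝ W]
variable {X D Y Xa Da Ya Xg Dg Yg : Type}
  [AddCommGroup X] [Module ℝ X] [AddCommGroup D] [Module ℝ D]
  [AddCommGroup Y] [Module ℝ Y]
  [AddCommGroup Xa] [Module ℝ Xa] [AddCommGroup Da] [Module ℝ Da]
  [AddCommGroup Ya] [Module ℝ Ya]
  [AddCommGroup Xg] [Module ℝ Xg] [AddCommGroup Dg] [Module ℝ Dg]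
  [AddCommGroup Yg] [Module ℝ Yg]

/-- `Sys` implements the contract `(Ass, Gar)` if `E ∘ Sys ≼ Gar` for every
compatible environment `E`, i.e., every environment with `E ≼ Ass`. -/
def Implements (Sys : DVSystem X W D Y)
    (Ass : DVSystem Xa W Da Ya) (Gar : DVSystem Xg W Dg Yg) : Prop :=
  ∀ (Xe De Ye : Type) [AddCommGroup Xe] [Module ℝ Xe] [FiniteDimensional ℝ Xe]
    [AddCommGroup De] [Module ℝ De] [FiniteDimensional ℝ De]
    [AddCommGroup Ye] [Module ℝ Ye] [FiniteDimensional ℝ Ye]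
    (E : DVSystem Xe W De Ye),
    Simulates E Ass → Simulates (comp E Sys) Gar

end contract

section refine

variable {W : Type} [AddCommGroup W] [Module ℝ W]
variable {Xa Da Ya Xg Dg Yg Xa' Da' Ya' Xg' Dg' Yg' : Type}
  [AddCommGroup Xa] [Module ℝ Xa] [AddCommGroup Da] [Module ℝ Da]
  [AddCommGroup Ya] [Module ℝ Ya]
  [AddCommGroup Xg] [Module ℝ Xg] [AddCommGroup Dg] [Module ℝ Dg]
  [AddCommGroup Yg] [Module ℝ Yg]
  [AddCommGroup Xa'] [Module ℝ Xa'] [AddCommGroup Da'] [Module ℝ Da']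
  [AddCommGroup Ya'] [Module ℝ Ya']
  [AddCommGroup Xg'] [Module ℝ Xg'] [AddCommGroup Dg'] [Module ℝ Dg']
  [AddCommGroup Yg'] [Module ℝ Yg']

/-- The contract `(Ass', Gar')` refines the contract `(Ass, Gar)`:
`Ass ≼ Ass'` and `Ass ∘ Gar' ≼ Gar`. -/
def Refines (Ass' : DVSystem Xa' W Da' Ya') (Gar' : DVSystem Xg' W Dg' Yg')
    (Ass : DVSystem Xa W Da Ya) (Gar : DVSystem Xg W Dg Yg) : Prop :=
  Simulates Ass Ass' ∧ Simulates (comp Ass Gar') Gar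

end refine

end DVSystem

open DVSystem

/-- Simulation is transitive: the relational composition of full simulation relations
is a full simulation relation; in particular `Σ₁ ≼ Σ₂` and `Σ₂ ≼ Σ₃` give `Σ₁ ≼ Σ₃`. -/
theorem simulation_trans {W : Type} [AddCommGroup W] [Module ℝ W] [FiniteDimensional ℝ W]
    {X₁ D₁ Y₁ : Type} [AddCommGroup X₁] [Module ℝ X₁] [FiniteDimensional ℝ X₁]
    [AddCommGroup D₁] [Module ℝ D₁] [FiniteDimensional ℝ D₁]
    [AddCommGroup Y₁] [Module ℝ Y₁] [FiniteDimensional ℝ Y₁]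
    {X₂ D₂ Y₂ : Type} [AddCommGroup X₂] [Module ℝ X₂] [FiniteDimensional ℝ X₂]
    [AddCommGroup D₂] [Module ℝ D₂] [FiniteDimensional ℝ D₂]
    [AddCommGroup Y₂] [Module ℝ Y₂] [FiniteDimensional ℝ Y₂]
    {X₃ D₃ Y₃ : Type} [AddCommGroup X₃] [Module ℝ X₃] [FiniteDimensional ℝ X₃]
    [AddCommGroup D₃] [Module ℝ D₃] [FiniteDimensional ℝ D₃]
    [AddCommGroup Y₃] [Module ℝ Y₃] [FiniteDimensional ℝ Y₃]
    (P₁ : DVSystem X₁ W D₁ Y₁) (P₂ : DVSystem X₂ W D₂ Y₂) (P₃ : DVSystem X₃ W D₃ Y₃)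
    (S₁₂ : Submodule ℝ (X₁ × X₂)) (S₂₃ : Submodule ℝ (X₂ × X₃))
    (h₁₂ : IsFullSimRel P₁ P₂ S₁₂) (h₂₃ : IsFullSimRel P₂ P₃ S₂₃) :
    IsFullSimRel P₁ P₃ (relComp S₁₂ S₂₃) ∧ Simulates P₁ P₃ := by
  obtain ⟨⟨hS12f, hS12s, hS12c⟩, hS12full⟩ := h₁₂
  obtain ⟨⟨hS23f, hS23s, hS23c⟩, hS23full⟩ := h₂₃
  have key : IsFullSimRel P₁ P₃ (relComp S₁₂ S₂₃) := by
    constructor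
    · refine ⟨?_, ?_, ?_⟩
      · rintro x₁ ⟨⟨a, c⟩, ⟨b, hab, hbc⟩, rfl⟩
        exact hS12f ⟨(a, b), hab, rfl⟩
      · rintro x₃ ⟨⟨a, c⟩, ⟨b, hab, hbc⟩, rfl⟩
        exact hS23s ⟨(b, c), hbc, rfl⟩
      · rintro x₁ x₃ ⟨x₂, h12, h23⟩
        obtain ⟨hstep12, hC12⟩ := hS12c x₁ x₂ h12
        obtain ⟨hstep23, hC23⟩ := hS23c x₂ x₃ h23
        refine ⟨?_, hC12.trans hC23⟩
        intro d₁ hd₁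
        obtain ⟨d₂, hd₂V, hd₂S⟩ := hstep12 d₁ hd₁
        obtain ⟨d₃, hd₃V, hd₃S⟩ := hstep23 d₂ hd₂V
        exact ⟨d₃, hd₃V, _, hd₂S, hd₃S⟩
    · apply le_antisymm
      · rintro x₁ ⟨⟨a, c⟩, ⟨b, hab, hbc⟩, rfl⟩
        exact hS12f ⟨(a, b), hab, rfl⟩
      · intro x₁ hx₁
        rw [← hS12full] at hx₁
        obtain ⟨⟨a, x₂⟩, hab, rfl⟩ := hx₁
        have hx₂ : x₂ ∈ P₂.V := hS12s ⟨(a, x₂), hab, rfl⟩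
        rw [← hS23full] at hx₂
        obtain ⟨⟨b, x₃⟩, hbc, hb⟩ := hx₂
        simp only [LinearMap.fst_apply] at hb
        subst hb
        exact ⟨(a, x₃), ⟨b, hab, hbc⟩, rfl⟩
  exact ⟨key, _, key⟩
end

section
/- For any two systems Σ₁, Σ₂ in driving variable form with the same external space W, the composition Σ₁ ∘ Σ₂ is simulated by each component: Σ₁ ∘ Σ₂ ≼ Σ₁ and Σ₁ ∘ Σ₂ ≼ Σ₂. -/
open DVSystem

lemma DVSystem.V_admissible {X W D Y : Type} [AddCommGroup X] [Module ℝ X]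
    [AddCommGroup W] [Module ℝ W] [AddCommGroup D] [Module ℝ D]
    [AddCommGroup Y] [Module ℝ Y] (P : DVSystem X W D Y) :
    P.Admissible P.V := by
  constructor
  · rw [DVSystem.V, (Submodule.gc_map_comap P.A).l_sSup]
    apply sSup_le
    rintro _ ⟨U, rfl⟩
    exact iSup_le fun hU => hU.1.trans (sup_le_sup_right (le_sSup hU) _)
  · exact sSup_le fun U hU => hU.2

/-- The composition `Σ₁ ∘ Σ₂` is simulated by each of its components. -/
theorem comp_simulated_by_components {W : Type} [AddCommGroup W] [Module ℝ W] [FiniteDimensional ℝ W]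
    {X₁ D₁ Y₁ : Type} [AddCommGroup X₁] [Module ℝ X₁] [FiniteDimensional ℝ X₁]
    [AddCommGroup D₁] [Module ℝ D₁] [FiniteDimensional ℝ D₁]
    [AddCommGroup Y₁] [Module ℝ Y₁] [FiniteDimensional ℝ Y₁]
    {X₂ D₂ Y₂ : Type} [AddCommGroup X₂] [Module ℝ X₂] [FiniteDimensional ℝ X₂]
    [AddCommGroup D₂] [Module ℝ D₂] [FiniteDimensional ℝ D₂]
    [AddCommGroup Y₂] [Module ℝ Y₂] [FiniteDimensional ℝ Y₂]
    (P₁ : DVSystem X₁ W D₁ Y₁) (P₂ : DVSystem X₂ W D₂ Y₂) :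
    Simulates (comp P₁ P₂) P₁ ∧ Simulates (comp P₁ P₂) P₂ := by
  set Q := comp P₁ P₂ with hQ
  have hVadm := Q.V_admissible
  have hker : Q.V ≤ LinearMap.ker Q.H := hVadm.2
  have hC : ∀ x ∈ Q.V, P₁.C x.1 = P₂.C x.2 := by
    intro x hx
    have h0 : Q.H x = 0 := hker hx
    have h2 := congrArg (fun p => p.2.2) h0
    simpa [hQ, comp, sub_eq_zero] using h2
  -- the first projection of V∘ is admissible for P₁
  have hproj1 : P₁.Admissible (Q.V.map (LinearMap.fst ℝ X₁ X₂)) := by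
    constructor
    · rintro _ ⟨_, ⟨x, hx, rfl⟩, rfl⟩
      have hA : Q.A x ∈ Q.V ⊔ LinearMap.range Q.G :=
        hVadm.1 (Submodule.mem_map_of_mem hx)
      rcases Submodule.mem_sup.mp hA with ⟨v, hv, g, hg, hsum⟩
      rcases hg with ⟨d, rfl⟩
      refine Submodule.mem_sup.mpr ⟨v.1, Submodule.mem_map_of_mem hv, P₁.G d.1, ⟨d.1, rfl⟩, ?_⟩
      have h1 := congrArg Prod.fst hsum
      simpa [hQ, comp] using h1
    · rintro _ ⟨x, hx, rfl⟩
      have h0 : Q.H x = 0 := hker hx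
      have h1 := congrArg (fun p => p.1) h0
      simpa [hQ, comp] using h1
  -- the second projection of V∘ is admissible for P₂
  have hproj2 : P₂.Admissible (Q.V.map (LinearMap.snd ℝ X₁ X₂)) := by
    constructor
    · rintro _ ⟨_, ⟨x, hx, rfl⟩, rfl⟩
      have hA : Q.A x ∈ Q.V ⊔ LinearMap.range Q.G :=
        hVadm.1 (Submodule.mem_map_of_mem hx)
      rcases Submodule.mem_sup.mp hA with ⟨v, hv, g, hg, hsum⟩
      rcases hg with ⟨d, rfl⟩
      refine Submodule.mem_sup.mpr ⟨v.2, Submodule.mem_map_of_mem hv, P₂.G d.2, ⟨d.2, rfl⟩, ?_⟩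
      have h1 := congrArg Prod.snd hsum
      simpa [hQ, comp] using h1
    · rintro _ ⟨x, hx, rfl⟩
      have h0 : Q.H x = 0 := hker hx
      have h1 := congrArg (fun p => p.2.1) h0
      simpa [hQ, comp] using h1
  have hle1 : Q.V.map (LinearMap.fst ℝ X₁ X₂) ≤ P₁.V := le_sSup hproj1
  have hle2 : Q.V.map (LinearMap.snd ℝ X₁ X₂) ≤ P₂.V := le_sSup hproj2
  constructor
  · -- Q ≼ P₁ via the graph of fst on V∘
    refine ⟨Q.V.map ((LinearMap.id : X₁ × X₂ →ₗ[ℝ] X₁ × X₂).prod (LinearMap.fst ℝ X₁ X₂)), ?_, ?_⟩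
    · refine ⟨?_, ?_, ?_⟩
      · rintro _ ⟨_, ⟨x, hx, rfl⟩, rfl⟩
        exact hx
      · rintro _ ⟨_, ⟨x, hx, rfl⟩, rfl⟩
        exact hle1 (Submodule.mem_map_of_mem hx)
      · rintro p z ⟨x, hx, heq⟩
        simp only [LinearMap.prod_apply, LinearMap.id_coe, id_eq, LinearMap.fst_apply,
          Pi.prod, Prod.mk.injEq] at heq
        obtain ⟨rfl, rfl⟩ := heq
        constructor
        · intro d hd
          refine ⟨d.1, ?_, ?_⟩
          · have h1 : (Q.A x + Q.G d).1 ∈ Q.V.map (LinearMap.fst ℝ X₁ X₂) :=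
              Submodule.mem_map_of_mem hd
            have h2 := hle1 h1
            simpa [hQ, comp] using h2
          · exact ⟨Q.A x + Q.G d, hd, by simp [hQ, comp]⟩
        · have hc := hC x hx
          simp only [hQ, comp, LinearMap.smul_apply, LinearMap.add_apply, LinearMap.comp_apply,
            LinearMap.fst_apply, LinearMap.snd_apply, id_eq, ← hc]
          module
    · ext z
      constructor
      · rintro ⟨_, ⟨x, hx, rfl⟩, rfl⟩
        exact hx
      · intro hz
        exact ⟨((LinearMap.id : X₁ × X₂ →ₗ[ℝ] X₁ × X₂).prod (LinearMap.fst ℝ X₁ X₂)) z,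
          Submodule.mem_map_of_mem hz, rfl⟩
  · -- Q ≼ P₂ via the graph of snd on V∘
    refine ⟨Q.V.map ((LinearMap.id : X₁ × X₂ →ₗ[ℝ] X₁ × X₂).prod (LinearMap.snd ℝ X₁ X₂)), ?_, ?_⟩
    · refine ⟨?_, ?_, ?_⟩
      · rintro _ ⟨_, ⟨x, hx, rfl⟩, rfl⟩
        exact hx
      · rintro _ ⟨_, ⟨x, hx, rfl⟩, rfl⟩
        exact hle2 (Submodule.mem_map_of_mem hx)
      · rintro p z ⟨x, hx, heq⟩
        simp only [LinearMap.prod_apply, LinearMap.id_coe, id_eq, LinearMap.snd_apply,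
          Pi.prod, Prod.mk.injEq] at heq
        obtain ⟨rfl, rfl⟩ := heq
        constructor
        · intro d hd
          refine ⟨d.2, ?_, ?_⟩
          · have h1 : (Q.A x + Q.G d).2 ∈ Q.V.map (LinearMap.snd ℝ X₁ X₂) :=
              Submodule.mem_map_of_mem hd
            have h2 := hle2 h1
            simpa [hQ, comp] using h2
          · exact ⟨Q.A x + Q.G d, hd, by simp [hQ, comp]⟩
        · have hc := hC x hx
          simp only [hQ, comp, LinearMap.smul_apply, LinearMap.add_apply, LinearMap.comp_apply,
            LinearMap.fst_apply, LinearMap.snd_apply, id_eq, hc]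
          module
    · ext z
      constructor
      · rintro ⟨_, ⟨x, hx, rfl⟩, rfl⟩
        exact hx
      · intro hz
        exact ⟨((LinearMap.id : X₁ × X₂ →ₗ[ℝ] X₁ × X₂).prod (LinearMap.snd ℝ X₁ X₂)) z,
          Submodule.mem_map_of_mem hz, rfl⟩
end

section
/- Simulation is preserved under system composition: let Σ₁, Σ₁', Σ₂, Σ₂' be systems in driving variable form with the same external space W such that Σ₁ ≼ Σ₁' and Σ₂ ≼ Σ₂'. Then Σ₁ ∘ Σ₂ ≼ Σ₁' ∘ Σ₂'. -/
namespace DVSystem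

section aux

variable {X W D Y : Type}
  [AddCommGroup X] [Module ℝ X] [AddCommGroup W] [Module ℝ W]
  [AddCommGroup D] [Module ℝ D] [AddCommGroup Y] [Module ℝ Y]

lemma V_admissible_s5 (P : DVSystem X W D Y) : P.Admissible P.V := by
  constructor
  · have h : P.V = ⨆ U : {U // P.Admissible U}, (U : Submodule ℝ X) := by
      rw [V, sSup_eq_iSup']
      rfl
    rw [h, Submodule.map_iSup]
    exact iSup_le fun U => (U.2.1).trans (sup_le_sup (le_iSup _ U) le_rfl)
  · exact sSup_le fun U hU => hU.2

lemma le_V (P : DVSystem X W D Y) {U : Submodule ℝ X} (h : P.Admissible U) : U ≤ P.V :=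
  le_sSup h

lemma V_step (P : DVSystem X W D Y) {x : X} (hx : x ∈ P.V) :
    ∃ d, P.A x + P.G d ∈ P.V := by
  have h := (V_admissible_s5 P).1 (Submodule.mem_map_of_mem (f := P.A) hx)
  rcases Submodule.mem_sup.1 h with ⟨v, hv, g, hg, hvg⟩
  rcases hg with ⟨d, rfl⟩
  refine ⟨-d, ?_⟩
  rw [map_neg, ← hvg, add_neg_cancel_right]
  exact hv

end aux

section compaux

variable {W : Type} [AddCommGroup W] [Module ℝ W]
variable {X₁ D₁ Y₁ : Type} [AddCommGroup X₁] [Module ℝ X₁]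
  [AddCommGroup D₁] [Module ℝ D₁] [AddCommGroup Y₁] [Module ℝ Y₁]
variable {X₂ D₂ Y₂ : Type} [AddCommGroup X₂] [Module ℝ X₂]
  [AddCommGroup D₂] [Module ℝ D₂] [AddCommGroup Y₂] [Module ℝ Y₂]

variable (P₁ : DVSystem X₁ W D₁ Y₁) (P₂ : DVSystem X₂ W D₂ Y₂)

lemma comp_A_apply (x : X₁ × X₂) : (comp P₁ P₂).A x = (P₁.A x.1, P₂.A x.2) := rfl

lemma comp_G_apply (d : D₁ × D₂) : (comp P₁ P₂).G d = (P₁.G d.1, P₂.G d.2) := rfl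

lemma comp_H_apply (x : X₁ × X₂) :
    (comp P₁ P₂).H x = (P₁.H x.1, P₂.H x.2, P₁.C x.1 - P₂.C x.2) := rfl

lemma comp_C_apply (x : X₁ × X₂) :
    (comp P₁ P₂).C x = (1/2 : ℝ) • (P₁.C x.1 + P₂.C x.2) := rfl

lemma compV_fst_le :
    ((comp P₁ P₂).V).map (LinearMap.fst ℝ X₁ X₂) ≤ P₁.V := by
  apply le_V
  constructor
  · rintro y hy
    rcases Submodule.mem_map.1 hy with ⟨x₁, hx₁, rfl⟩
    rcases Submodule.mem_map.1 hx₁ with ⟨x, hx, rfl⟩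
    have h := (V_admissible_s5 (comp P₁ P₂)).1 (Submodule.mem_map_of_mem (f := (comp P₁ P₂).A) hx)
    rcases Submodule.mem_sup.1 h with ⟨v, hv, g, hg, hvg⟩
    rcases hg with ⟨d, rfl⟩
    refine Submodule.mem_sup.2 ⟨v.1, ⟨v, hv, rfl⟩, P₁.G d.1, ⟨d.1, rfl⟩, ?_⟩
    have := congrArg Prod.fst hvg
    simpa [comp_A_apply, comp_G_apply] using this
  · rintro y hy
    rcases Submodule.mem_map.1 hy with ⟨x, hx, rfl⟩
    have h := (V_admissible_s5 (comp P₁ P₂)).2 hx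
    have h0 : (comp P₁ P₂).H x = 0 := h
    rw [comp_H_apply] at h0
    simpa using congrArg Prod.fst h0

lemma compV_snd_le :
    ((comp P₁ P₂).V).map (LinearMap.snd ℝ X₁ X₂) ≤ P₂.V := by
  apply le_V
  constructor
  · rintro y hy
    rcases Submodule.mem_map.1 hy with ⟨x₂, hx₂, rfl⟩
    rcases Submodule.mem_map.1 hx₂ with ⟨x, hx, rfl⟩
    have h := (V_admissible_s5 (comp P₁ P₂)).1 (Submodule.mem_map_of_mem (f := (comp P₁ P₂).A) hx)
    rcases Submodule.mem_sup.1 h with ⟨v, hv, g, hg, hvg⟩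
    rcases hg with ⟨d, rfl⟩
    refine Submodule.mem_sup.2 ⟨v.2, ⟨v, hv, rfl⟩, P₂.G d.2, ⟨d.2, rfl⟩, ?_⟩
    have := congrArg Prod.snd hvg
    simpa [comp_A_apply, comp_G_apply] using this
  · rintro y hy
    rcases Submodule.mem_map.1 hy with ⟨x, hx, rfl⟩
    have h := (V_admissible_s5 (comp P₁ P₂)).2 hx
    have h0 : (comp P₁ P₂).H x = 0 := h
    rw [comp_H_apply] at h0
    simpa using congrArg (fun p => p.2.1) h0

lemma compV_C {x : X₁ × X₂} (hx : x ∈ (comp P₁ P₂).V) : P₁.C x.1 = P₂.C x.2 := by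
  have h0 : (comp P₁ P₂).H x = 0 := (V_admissible_s5 (comp P₁ P₂)).2 hx
  rw [comp_H_apply] at h0
  have := congrArg (fun p => p.2.2) h0
  simpa [sub_eq_zero] using this

lemma compV_mem_fst {x : X₁ × X₂} (hx : x ∈ (comp P₁ P₂).V) : x.1 ∈ P₁.V :=
  compV_fst_le P₁ P₂ ⟨x, hx, rfl⟩

lemma compV_mem_snd {x : X₁ × X₂} (hx : x ∈ (comp P₁ P₂).V) : x.2 ∈ P₂.V :=
  compV_snd_le P₁ P₂ ⟨x, hx, rfl⟩

end compaux

end DVSystem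

open DVSystem

/-- Simulation is preserved under system composition. -/
theorem comp_simulates_comp {W : Type} [AddCommGroup W] [Module ℝ W] [FiniteDimensional ℝ W]
    {X₁ D₁ Y₁ : Type} [AddCommGroup X₁] [Module ℝ X₁] [FiniteDimensional ℝ X₁]
    [AddCommGroup D₁] [Module ℝ D₁] [FiniteDimensional ℝ D₁]
    [AddCommGroup Y₁] [Module ℝ Y₁] [FiniteDimensional ℝ Y₁]
    {X₂ D₂ Y₂ : Type} [AddCommGroup X₂] [Module ℝ X₂] [FiniteDimensional ℝ X₂]
    [AddCommGroup D₂] [Module ℝ D₂] [FiniteDimensional ℝ D₂]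
    [AddCommGroup Y₂] [Module ℝ Y₂] [FiniteDimensional ℝ Y₂]
    {X₁' D₁' Y₁' : Type} [AddCommGroup X₁'] [Module ℝ X₁'] [FiniteDimensional ℝ X₁']
    [AddCommGroup D₁'] [Module ℝ D₁'] [FiniteDimensional ℝ D₁']
    [AddCommGroup Y₁'] [Module ℝ Y₁'] [FiniteDimensional ℝ Y₁']
    {X₂' D₂' Y₂' : Type} [AddCommGroup X₂'] [Module ℝ X₂'] [FiniteDimensional ℝ X₂']
    [AddCommGroup D₂'] [Module ℝ D₂'] [FiniteDimensional ℝ D₂']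
    [AddCommGroup Y₂'] [Module ℝ Y₂'] [FiniteDimensional ℝ Y₂']
    (P₁ : DVSystem X₁ W D₁ Y₁) (P₂ : DVSystem X₂ W D₂ Y₂)
    (P₁' : DVSystem X₁' W D₁' Y₁') (P₂' : DVSystem X₂' W D₂' Y₂')
    (h₁ : Simulates P₁ P₁') (h₂ : Simulates P₂ P₂') :
    Simulates (comp P₁ P₂) (comp P₁' P₂') := by
  obtain ⟨S₁, ⟨hS₁f, hS₁s, hS₁c⟩, hS₁full⟩ := h₁
  obtain ⟨S₂, ⟨hS₂f, hS₂s, hS₂c⟩, hS₂full⟩ := h₂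
  set S : Submodule ℝ ((X₁ × X₂) × (X₁' × X₂')) :=
    { carrier := {p | (p.1.1, p.2.1) ∈ S₁ ∧ (p.1.2, p.2.2) ∈ S₂ ∧ p.1 ∈ (comp P₁ P₂).V}
      zero_mem' := ⟨by exact S₁.zero_mem, by exact S₂.zero_mem, Submodule.zero_mem _⟩
      add_mem' := by
        rintro a b ⟨ha1, ha2, ha3⟩ ⟨hb1, hb2, hb3⟩
        exact ⟨S₁.add_mem ha1 hb1, S₂.add_mem ha2 hb2, Submodule.add_mem _ ha3 hb3⟩
      smul_mem' := by
        rintro c a ⟨h1, h2, h3⟩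
        exact ⟨S₁.smul_mem c h1, S₂.smul_mem c h2, Submodule.smul_mem _ c h3⟩ } with hSdef
  have hSmem : ∀ p : (X₁ × X₂) × (X₁' × X₂'), p ∈ S ↔
      (p.1.1, p.2.1) ∈ S₁ ∧ (p.1.2, p.2.2) ∈ S₂ ∧ p.1 ∈ (comp P₁ P₂).V := fun p => Iff.rfl
  -- π₂(S) ≤ V of (comp P₁' P₂')
  have hsnd : S.map (LinearMap.snd ℝ (X₁ × X₂) (X₁' × X₂')) ≤ (comp P₁' P₂').V := by
    apply le_V
    constructor
    · rintro y hy
      rcases Submodule.mem_map.1 hy with ⟨x', hx', rfl⟩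
      rcases Submodule.mem_map.1 hx' with ⟨p, hp, rfl⟩
      rcases (hSmem p).1 hp with ⟨hp1, hp2, hpV⟩
      -- step in V∘
      obtain ⟨d, hd⟩ := V_step (comp P₁ P₂) hpV
      have hd1 : P₁.A p.1.1 + P₁.G d.1 ∈ P₁.V := by
        have := compV_mem_fst P₁ P₂ hd
        simpa [comp_A_apply, comp_G_apply] using this
      have hd2 : P₂.A p.1.2 + P₂.G d.2 ∈ P₂.V := by
        have := compV_mem_snd P₁ P₂ hd
        simpa [comp_A_apply, comp_G_apply] using this
      obtain ⟨d₁', hd₁'V, hd₁'S⟩ := (hS₁c _ _ hp1).1 d.1 hd1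
      obtain ⟨d₂', hd₂'V, hd₂'S⟩ := (hS₂c _ _ hp2).1 d.2 hd2
      have hnew : ((P₁.A p.1.1 + P₁.G d.1, P₂.A p.1.2 + P₂.G d.2),
          (P₁'.A p.2.1 + P₁'.G d₁', P₂'.A p.2.2 + P₂'.G d₂')) ∈ S := by
        refine (hSmem _).2 ⟨hd₁'S, hd₂'S, ?_⟩
        simpa [comp_A_apply, comp_G_apply] using hd
      refine Submodule.mem_sup.2 ⟨(P₁'.A p.2.1 + P₁'.G d₁', P₂'.A p.2.2 + P₂'.G d₂'),
        ⟨_, hnew, rfl⟩, (comp P₁' P₂').G (-d₁', -d₂'), ⟨_, rfl⟩, ?_⟩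
      simp [comp_A_apply, comp_G_apply, Prod.ext_iff]
    · rintro y hy
      rcases Submodule.mem_map.1 hy with ⟨p, hp, rfl⟩
      rcases (hSmem p).1 hp with ⟨hp1, hp2, hpV⟩
      have h1 : p.2.1 ∈ P₁'.V := hS₁s ⟨_, hp1, rfl⟩
      have h2 : p.2.2 ∈ P₂'.V := hS₂s ⟨_, hp2, rfl⟩
      have hC : P₁'.C p.2.1 = P₂'.C p.2.2 := by
        rw [← (hS₁c _ _ hp1).2, ← (hS₂c _ _ hp2).2]
        exact compV_C P₁ P₂ hpV
      have hH1 : P₁'.H p.2.1 = 0 := (V_admissible_s5 P₁').2 h1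
      have hH2 : P₂'.H p.2.2 = 0 := (V_admissible_s5 P₂').2 h2
      show (comp P₁' P₂').H _ = 0
      rw [comp_H_apply]
      simp [hH1, hH2, sub_eq_zero, hC]
  refine ⟨S, ⟨?_, hsnd, ?_⟩, ?_⟩
  · -- π₁(S) ≤ V∘
    rintro y hy
    rcases Submodule.mem_map.1 hy with ⟨p, hp, rfl⟩
    exact ((hSmem p).1 hp).2.2
  · -- SimConds
    rintro x x' hxx'
    rcases (hSmem (x, x')).1 hxx' with ⟨h1, h2, hV⟩
    constructor
    · rintro d hd
      have hd1 : P₁.A x.1 + P₁.G d.1 ∈ P₁.V := by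
        have := compV_mem_fst P₁ P₂ hd
        simpa [comp_A_apply, comp_G_apply] using this
      have hd2 : P₂.A x.2 + P₂.G d.2 ∈ P₂.V := by
        have := compV_mem_snd P₁ P₂ hd
        simpa [comp_A_apply, comp_G_apply] using this
      obtain ⟨d₁', hd₁'V, hd₁'S⟩ := (hS₁c _ _ h1).1 d.1 hd1
      obtain ⟨d₂', hd₂'V, hd₂'S⟩ := (hS₂c _ _ h2).1 d.2 hd2
      refine ⟨(d₁', d₂'), ?_, ?_⟩
      · apply hsnd
        refine ⟨((P₁.A x.1 + P₁.G d.1, P₂.A x.2 + P₂.G d.2),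
          (P₁'.A x'.1 + P₁'.G d₁', P₂'.A x'.2 + P₂'.G d₂')), ?_, rfl⟩
        refine (hSmem _).2 ⟨hd₁'S, hd₂'S, ?_⟩
        simpa [comp_A_apply, comp_G_apply] using hd
      · refine (hSmem _).2 ⟨?_, ?_, ?_⟩
        · simpa [comp_A_apply, comp_G_apply] using hd₁'S
        · simpa [comp_A_apply, comp_G_apply] using hd₂'S
        · simpa [comp_A_apply, comp_G_apply] using hd
    · rw [comp_C_apply, comp_C_apply, (hS₁c _ _ h1).2, (hS₂c _ _ h2).2]
  · -- fullness
    apply le_antisymm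
    · rintro y hy
      rcases Submodule.mem_map.1 hy with ⟨p, hp, rfl⟩
      exact ((hSmem p).1 hp).2.2
    · rintro x hx
      have h1 : x.1 ∈ P₁.V := compV_mem_fst P₁ P₂ hx
      have h2 : x.2 ∈ P₂.V := compV_mem_snd P₁ P₂ hx
      rw [← hS₁full] at h1
      rw [← hS₂full] at h2
      rcases Submodule.mem_map.1 h1 with ⟨q₁, hq₁, hq₁e⟩
      rcases Submodule.mem_map.1 h2 with ⟨q₂, hq₂, hq₂e⟩
      refine Submodule.mem_map.2 ⟨(x, (q₁.2, q₂.2)), (hSmem _).2 ⟨?_, ?_, hx⟩, rfl⟩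
      · have h : q₁ = (x.1, q₁.2) := Prod.ext hq₁e rfl
        rw [← h]; exact hq₁
      · have h : q₂ = (x.2, q₂.2) := Prod.ext hq₂e rfl
        rw [← h]; exact hq₂
end

section
/- Geometric characterization of simulation relations for contract implementation: consider a system Σ in driving variable form and a contract C = (A, G), let (A∘, G∘, C∘, H∘) be the realization of the composition A ∘ Σ with state space X^a × X, let V∘,* and V^{g,*} denote the consistent subspaces of A ∘ Σ and G respectively. Then a linear subspace S ⊆ (X^a × X) × X^g satisfies π_{X^a×X}(S) ⊆ V∘,* and π_{X^g}(S) ⊆ V^{g,*} and is a simulation relation of A ∘ Σ by G if and only if the following three conditions hold: (12) diag(A∘, A^g) S ⊆ S + im diag(G∘, G^g); (13) (im G∘ ∩ V∘,*) × {0} ⊆ S + ({0} × (im G^g ∩ V^{g,*})); (14) S ⊆ ker H∘ × ker H^g intersected with {((x∘, x^g)) : C∘ x∘ = C^g x^g}. -/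
open DVSystem

section aux

variable {X W D Y : Type}
  [AddCommGroup X] [Module ℝ X] [AddCommGroup W] [Module ℝ W]
  [AddCommGroup D] [Module ℝ D] [AddCommGroup Y] [Module ℝ Y]

lemma DVSystem.Admissible.le_V {P : DVSystem X W D Y} {U : Submodule ℝ X}
    (h : P.Admissible U) : U ≤ P.V := le_sSup h

lemma DVSystem.V_le_ker (P : DVSystem X W D Y) : P.V ≤ LinearMap.ker P.H :=
  sSup_le fun _ hU => hU.2

lemma DVSystem.V_mapA (P : DVSystem X W D Y) :
    (P.V).map P.A ≤ P.V ⊔ LinearMap.range P.G := by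
  rw [Submodule.map_le_iff_le_comap]
  refine sSup_le fun U hU => ?_
  rw [← Submodule.map_le_iff_le_comap]
  exact hU.1.trans (sup_le_sup_right (le_sSup hU) _)

end aux

theorem simRel_iff_geometric_general
    {W : Type} [AddCommGroup W] [Module ℝ W]
    {X₁ D₁ Y₁ : Type} [AddCommGroup X₁] [Module ℝ X₁]
    [AddCommGroup D₁] [Module ℝ D₁] [AddCommGroup Y₁] [Module ℝ Y₁]
    {X₂ D₂ Y₂ : Type} [AddCommGroup X₂] [Module ℝ X₂]
    [AddCommGroup D₂] [Module ℝ D₂] [AddCommGroup Y₂] [Module ℝ Y₂]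
    (P₁ : DVSystem X₁ W D₁ Y₁) (P₂ : DVSystem X₂ W D₂ Y₂)
    (S : Submodule ℝ (X₁ × X₂)) :
    IsSimRel P₁ P₂ S ↔
      (S.map (P₁.A.prodMap P₂.A) ≤ S ⊔ LinearMap.range (P₁.G.prodMap P₂.G) ∧
        Submodule.prod (LinearMap.range P₁.G ⊓ P₁.V) (⊥ : Submodule ℝ X₂) ≤
          S ⊔ Submodule.prod (⊥ : Submodule ℝ X₁) (LinearMap.range P₂.G ⊓ P₂.V) ∧
        S ≤ Submodule.prod (LinearMap.ker P₁.H) (LinearMap.ker P₂.H) ⊓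
          LinearMap.ker (P₁.C ∘ₗ LinearMap.fst ℝ X₁ X₂ -
            P₂.C ∘ₗ LinearMap.snd ℝ X₁ X₂)) := by
  constructor
  · rintro ⟨h1, h2, h3⟩
    have hmem1 : ∀ {x₁ : X₁} {x₂ : X₂}, (x₁, x₂) ∈ S → x₁ ∈ P₁.V := fun {x₁ x₂} hx =>
      h1 ⟨(x₁, x₂), hx, rfl⟩
    have hmem2 : ∀ {x₁ : X₁} {x₂ : X₂}, (x₁, x₂) ∈ S → x₂ ∈ P₂.V := fun {x₁ x₂} hx =>
      h2 ⟨(x₁, x₂), hx, rfl⟩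
    refine ⟨?_, ?_, ?_⟩
    · -- (12)
      rintro p hp
      obtain ⟨⟨x₁, x₂⟩, hx, rfl⟩ := hp
      have hAx : P₁.A x₁ ∈ P₁.V ⊔ LinearMap.range P₁.G :=
        P₁.V_mapA ⟨x₁, hmem1 hx, rfl⟩
      obtain ⟨v, hv, z, ⟨e, rfl⟩, hvz⟩ := Submodule.mem_sup.mp hAx
      have hv' : P₁.A x₁ + P₁.G (-e) ∈ P₁.V := by
        have : P₁.A x₁ + P₁.G (-e) = v := by
          rw [map_neg]; rw [← hvz]; abel
        rwa [this]
      obtain ⟨d₂, hd₂V, hd₂S⟩ := (h3 x₁ x₂ hx).1 (-e) hv'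
      refine Submodule.mem_sup.mpr ⟨_, hd₂S, (P₁.G e, P₂.G (-d₂)), ⟨(e, -d₂), rfl⟩, ?_⟩
      ext <;> simp [map_neg]
    · -- (13)
      rintro ⟨x₁, z⟩ ⟨⟨⟨d₁, rfl⟩, hV⟩, hz⟩
      have hz0 : z = 0 := hz
      subst hz0
      have hv : P₁.A 0 + P₁.G d₁ ∈ P₁.V := by simpa using hV
      obtain ⟨d₂, hd₂V, hd₂S⟩ := (h3 0 0 S.zero_mem).1 d₁ hv
      simp only [map_zero, zero_add] at hd₂V hd₂S
      refine Submodule.mem_sup.mpr ⟨(P₁.G d₁, P₂.G d₂), hd₂S,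
        (0, -(P₂.G d₂)), ⟨rfl, ⟨⟨-d₂, by simp⟩, neg_mem hd₂V⟩⟩, ?_⟩
      ext <;> simp
    · -- (14)
      rintro ⟨x₁, x₂⟩ hx
      refine ⟨⟨P₁.V_le_ker (hmem1 hx), P₂.V_le_ker (hmem2 hx)⟩, ?_⟩
      have hC := (h3 x₁ x₂ hx).2
      simp [LinearMap.mem_ker, sub_eq_zero, hC]
  · rintro ⟨h12, h13, h14⟩
    have hπ₁ : S.map (LinearMap.fst ℝ X₁ X₂) ≤ P₁.V := by
      refine DVSystem.Admissible.le_V ⟨?_, ?_⟩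
      · rintro y ⟨x₁', ⟨⟨x₁, x₂⟩, hx, rfl⟩, rfl⟩
        have := h12 ⟨(x₁, x₂), hx, rfl⟩
        obtain ⟨⟨s₁, s₂⟩, hs, ⟨z₁, z₂⟩, ⟨⟨e₁, e₂⟩, he⟩, hsum⟩ := Submodule.mem_sup.mp this
        refine Submodule.mem_sup.mpr ⟨s₁, ⟨(s₁, s₂), hs, rfl⟩, z₁, ⟨e₁, ?_⟩, ?_⟩
        · exact congrArg Prod.fst he
        · simpa using congrArg Prod.fst hsum
      · rintro y ⟨⟨x₁, x₂⟩, hx, rfl⟩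
        exact ((h14 hx).1).1
    have hπ₂ : S.map (LinearMap.snd ℝ X₁ X₂) ≤ P₂.V := by
      refine DVSystem.Admissible.le_V ⟨?_, ?_⟩
      · rintro y ⟨x₂', ⟨⟨x₁, x₂⟩, hx, rfl⟩, rfl⟩
        have := h12 ⟨(x₁, x₂), hx, rfl⟩
        obtain ⟨⟨s₁, s₂⟩, hs, ⟨z₁, z₂⟩, ⟨⟨e₁, e₂⟩, he⟩, hsum⟩ := Submodule.mem_sup.mp this
        refine Submodule.mem_sup.mpr ⟨s₂, ⟨(s₁, s₂), hs, rfl⟩, z₂, ⟨e₂, ?_⟩, ?_⟩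
        · exact congrArg Prod.snd he
        · simpa using congrArg Prod.snd hsum
      · rintro y ⟨⟨x₁, x₂⟩, hx, rfl⟩
        exact ((h14 hx).1).2
    refine ⟨hπ₁, hπ₂, ?_⟩
    intro x₁ x₂ hx
    constructor
    · intro d₁ hd₁
      have := h12 ⟨(x₁, x₂), hx, rfl⟩
      obtain ⟨⟨s₁, s₂⟩, hs, ⟨z₁, z₂⟩, ⟨⟨e₁, e₂⟩, he⟩, hsum⟩ := Submodule.mem_sup.mp this
      have he₁ : z₁ = P₁.G e₁ := (congrArg Prod.fst he).symm
      have he₂ : z₂ = P₂.G e₂ := (congrArg Prod.snd he).symm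
      have hA₁ : P₁.A x₁ = s₁ + P₁.G e₁ := by
        have := congrArg Prod.fst hsum; simp at this; rw [← this, he₁]
      have hA₂ : P₂.A x₂ = s₂ + P₂.G e₂ := by
        have := congrArg Prod.snd hsum; simp at this; rw [← this, he₂]
      have hs₁V : s₁ ∈ P₁.V := hπ₁ ⟨(s₁, s₂), hs, rfl⟩
      have hGV : P₁.G (e₁ + d₁) ∈ LinearMap.range P₁.G ⊓ P₁.V := by
        refine ⟨⟨e₁ + d₁, rfl⟩, ?_⟩
        have : P₁.G (e₁ + d₁) = (P₁.A x₁ + P₁.G d₁) - s₁ := by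
          rw [hA₁, map_add]; abel
        rw [this]
        exact Submodule.sub_mem _ hd₁ hs₁V
      have := h13 (⟨hGV, Submodule.zero_mem _⟩ :
        ((P₁.G (e₁ + d₁), (0 : X₂))) ∈
          Submodule.prod (LinearMap.range P₁.G ⊓ P₁.V) (⊥ : Submodule ℝ X₂))
      obtain ⟨⟨t₁, t₂⟩, ht, ⟨u₁, u₂⟩, ⟨hu₁, hu₂⟩, hsum2⟩ := Submodule.mem_sup.mp this
      have hu₁0 : u₁ = 0 := hu₁
      have ht₁ : t₁ = P₁.G (e₁ + d₁) := by
        have := congrArg Prod.fst hsum2; simp [hu₁0] at this; rw [map_add]; exact this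
      have ht₂ : t₂ = -u₂ := by
        have := congrArg Prod.snd hsum2; simp at this
        linear_combination (norm := abel) this
      obtain ⟨⟨f₂, hf₂⟩, hu₂V⟩ := hu₂
      refine ⟨-e₂ - f₂, ?_, ?_⟩
      · -- membership of pair in S, then project
        have hpair : (P₁.A x₁ + P₁.G d₁, P₂.A x₂ + P₂.G (-e₂ - f₂)) ∈ S := by
          have : (P₁.A x₁ + P₁.G d₁, P₂.A x₂ + P₂.G (-e₂ - f₂)) = (s₁, s₂) + (t₁, t₂) := by
            ext
            · simp [hA₁, ht₁, map_add]; abel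
            · simp [hA₂, ht₂, map_sub, map_neg, hf₂]; abel
          rw [this]; exact S.add_mem hs ht
        exact hπ₂ ⟨_, hpair, rfl⟩
      · have : (P₁.A x₁ + P₁.G d₁, P₂.A x₂ + P₂.G (-e₂ - f₂)) = (s₁, s₂) + (t₁, t₂) := by
          ext
          · simp [hA₁, ht₁, map_add]; abel
          · simp [hA₂, ht₂, map_sub, map_neg, hf₂]; abel
        rw [this]; exact S.add_mem hs ht
    · have hC := (h14 hx).2
      simpa [LinearMap.mem_ker, sub_eq_zero] using hC

/-- Geometric characterization of simulation relations of `Ass ∘ Σ` by `Gar`: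
conditions (12), (13), (14). -/
theorem simRel_iff_geometric {W : Type} [AddCommGroup W] [Module ℝ W] [FiniteDimensional ℝ W]
    {X D Y : Type} [AddCommGroup X] [Module ℝ X] [FiniteDimensional ℝ X]
    [AddCommGroup D] [Module ℝ D] [FiniteDimensional ℝ D]
    [AddCommGroup Y] [Module ℝ Y] [FiniteDimensional ℝ Y]
    {Xa Da Ya : Type} [AddCommGroup Xa] [Module ℝ Xa] [FiniteDimensional ℝ Xa]
    [AddCommGroup Da] [Module ℝ Da] [FiniteDimensional ℝ Da]
    [AddCommGroup Ya] [Module ℝ Ya] [FiniteDimensional ℝ Ya]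
    {Xg Dg Yg : Type} [AddCommGroup Xg] [Module ℝ Xg] [FiniteDimensional ℝ Xg]
    [AddCommGroup Dg] [Module ℝ Dg] [FiniteDimensional ℝ Dg]
    [AddCommGroup Yg] [Module ℝ Yg] [FiniteDimensional ℝ Yg]
    (Sys : DVSystem X W D Y) (Ass : DVSystem Xa W Da Ya) (Gar : DVSystem Xg W Dg Yg)
    (S : Submodule ℝ ((Xa × X) × Xg)) :
    IsSimRel (comp Ass Sys) Gar S ↔
      (S.map (((comp Ass Sys).A).prodMap Gar.A) ≤
          S ⊔ LinearMap.range (((comp Ass Sys).G).prodMap Gar.G) ∧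
        Submodule.prod (LinearMap.range (comp Ass Sys).G ⊓ (comp Ass Sys).V)
            (⊥ : Submodule ℝ Xg) ≤
          S ⊔ Submodule.prod (⊥ : Submodule ℝ (Xa × X))
            (LinearMap.range Gar.G ⊓ Gar.V) ∧
        S ≤ Submodule.prod (LinearMap.ker (comp Ass Sys).H) (LinearMap.ker Gar.H) ⊓
          LinearMap.ker ((comp Ass Sys).C ∘ₗ LinearMap.fst ℝ (Xa × X) Xg -
            Gar.C ∘ₗ LinearMap.snd ℝ (Xa × X) Xg)) :=
  simRel_iff_geometric_general (comp Ass Sys) Gar S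
end

section
/- In the vehicle-following example, the consistent subspace of the composition A ∘ Σ equals the diagonal: with assumptions A given on ℝ⁴ by A^a(s₁, v₁, s₂, v₂) = (v₁, 0, 0, 0), G^a : ℝ³ → ℝ⁴, G^a(d₁, d₂, d₃) = (0, d₁, d₂, d₃), C^a = I, H^a = 0, and system Σ given on ℝ⁴ (for parameters h, k > 0) by A(s₁, v₁, s₂, v₂) = (0, 0, v₂, kh⁻¹s₁ + h⁻¹v₁ − kh⁻¹s₂ − (k + h⁻¹)v₂), G : ℝ² → ℝ⁴, G(d₁, d₂) = (d₁, d₂, 0, 0), C = I, H = 0, the consistent subspace of A ∘ Σ is V∘,* = {(x^a, x) ∈ ℝ⁴ × ℝ⁴ : x^a = x}. -/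
open DVSystem

/-- The assumptions 𝒜 of the vehicle-following example: the lead vehicle satisfies
the kinematic relation `ṡ₁ = v₁`; the remaining variables are unconstrained. -/
noncomputable def vehAss : DVSystem (Fin 4 → ℝ) (Fin 4 → ℝ) (Fin 3 → ℝ) (Fin 1 → ℝ) where
  A := Matrix.toLin' !![0, 1, 0, 0; 0, 0, 0, 0; 0, 0, 0, 0; 0, 0, 0, 0]
  G := Matrix.toLin' !![0, 0, 0; 1, 0, 0; 0, 1, 0; 0, 0, 1]
  C := LinearMap.id
  H := 0

/-- The controlled follower vehicle Σ of the vehicle-following example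
(dynamics `ṡ₂ = v₂`, `v̇₂ = h⁻¹(v₁ − v₂) + k h⁻¹(s₁ − s₂ − h v₂)`). -/
noncomputable def vehSys (h k : ℝ) : DVSystem (Fin 4 → ℝ) (Fin 4 → ℝ) (Fin 2 → ℝ) (Fin 1 → ℝ) where
  A := Matrix.toLin' !![0, 0, 0, 0; 0, 0, 0, 0; 0, 0, 0, 1;
        k * h⁻¹, h⁻¹, -(k * h⁻¹), -(k + h⁻¹)]
  G := Matrix.toLin' !![1, 0; 0, 1; 0, 0; 0, 0]
  C := LinearMap.id
  H := 0

/-- In the vehicle-following example, the consistent subspace of `𝒜 ∘ Σ` is the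
diagonal `{(x^a, x) | x^a = x}`. -/
theorem veh_comp_consistent_eq_diagonal (h k : ℝ) (hh : 0 < h) (hk : 0 < k) :
    (comp vehAss (vehSys h k)).V =
      LinearMap.graph (LinearMap.id : (Fin 4 → ℝ) →ₗ[ℝ] Fin 4 → ℝ) := by
  have hker : LinearMap.ker (comp vehAss (vehSys h k)).H =
      LinearMap.graph (LinearMap.id : (Fin 4 → ℝ) →ₗ[ℝ] Fin 4 → ℝ) := by
    ext ⟨x, y⟩
    simp [comp, vehAss, vehSys, LinearMap.mem_ker, LinearMap.mem_graph_iff,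
      Prod.ext_iff, funext_iff, sub_eq_zero, eq_comm]
  apply le_antisymm
  · exact sSup_le fun U hU => hU.2.trans hker.le
  · apply le_sSup
    constructor
    · rintro z hz
      rw [Submodule.mem_map] at hz
      obtain ⟨⟨x, y⟩, hxy, rfl⟩ := hz
      rw [LinearMap.mem_graph_iff] at hxy
      simp only [LinearMap.id_coe, id_eq] at hxy
      subst hxy
      set s : ℝ := k * h⁻¹ * y 0 + h⁻¹ * y 1 + -(k * h⁻¹) * y 2 + -(k + h⁻¹) * y 3 with hs
      apply Submodule.mem_sup.2
      refine ⟨(![y 1, 0, y 3, s], ![y 1, 0, y 3, s]), (LinearMap.mem_graph_iff _ _).2 rfl,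
        (vehAss.G.prodMap (vehSys h k).G) (![0, -(y 3), -s], ![-(y 1), 0]),
        ⟨(![0, -(y 3), -s], ![-(y 1), 0]), rfl⟩, ?_⟩
      show _ = (comp vehAss (vehSys h k)).A (y, y)
      simp only [comp, vehAss, vehSys, LinearMap.prodMap_apply, Prod.mk_add_mk,
        Matrix.toLin'_apply, Prod.ext_iff]
      constructor <;>
        · simp only [Matrix.cons_mulVec, Matrix.cons_dotProduct, Matrix.dotProduct_of_isEmpty,
            Matrix.empty_mulVec, Matrix.cons_add, Matrix.empty_add_empty, Matrix.head_cons,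
            Matrix.tail_cons, add_zero]
          funext i; fin_cases i <;>
            simp [hs, Matrix.vecHead, Matrix.vecTail, Function.comp,
              show Fin.succ 0 = (1 : Fin 4) from rfl, show Fin.succ 1 = (2 : Fin 4) from rfl,
              show Fin.succ 2 = (3 : Fin 4) from rfl] <;> ring
    · exact hker.ge
end
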